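/- Let C in M_n(\u2102) and D in M_m(\u2102) be positive definite matrices such that I - C and I - D are also positive definite. Put P_C = [[C, \u221a(C(I-C))], [\u221a(C(I-C)), I-C]] in M_{2n}(\u2102), P_D = [[D, \u221a(D(I-D))], [\u221a(D(I-D)), I-D]] in M_{2m}(\u2102), and let P_n' = diag(I_n, 0) in M_{2n}(\u2102) and P_m' = diag(I_m, 0) in M_{2m}(\u2102). In M_{2n}(\u2102) \u2297 M_{2m}(\u2102) (Kronecker product, identified with M_{4nm}(\u2102)) set P = P_C \u2297 P_D + (I_{2n} - P_C) \u2297 P_m' and Q = P_n' \u2297 P_D + (I_{2n} - P_n') \u2297 P_m'. Then Q P Q is unitarily equivalent in M_{4nm}(\u2102) to the block diagonal matrix (I_2 \u2297 (I_{nm} - (I_n - C) \u2297 (I_m - D))) \u2295 0_{2nm}. -/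

import Mathlib

open Matrix Kronecker
open scoped ComplexOrder


namespace Matrix.PosSemidef

noncomputable def sqrt {ι : Type*} [Fintype ι] [DecidableEq ι] {A : Matrix ι ι ℂ}
    (hA : A.PosSemidef) : Matrix ι ι ℂ :=
  (hA.1.eigenvectorUnitary : Matrix ι ι ℂ) *
    Matrix.diagonal (RCLike.ofReal ∘ Real.sqrt ∘ hA.1.eigenvalues) *
    star (hA.1.eigenvectorUnitary : Matrix ι ι ℂ)

lemma posSemidef_sqrt {ι : Type*} [Fintype ι] [DecidableEq ι] {A : Matrix ι ι ℂ}
    (hA : A.PosSemidef) : hA.sqrt.PosSemidef := by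
  unfold sqrt
  apply Matrix.PosSemidef.mul_mul_conjTranspose_same
  apply Matrix.PosSemidef.diagonal
  intro i
  simp only [Pi.zero_apply, Function.comp_apply]
  exact RCLike.ofReal_nonneg.mpr (Real.sqrt_nonneg _)

lemma sqrt_mul_self {ι : Type*} [Fintype ι] [DecidableEq ι] {A : Matrix ι ι ℂ}
    (hA : A.PosSemidef) : hA.sqrt * hA.sqrt = A := by
  have hU2 : star (hA.1.eigenvectorUnitary : Matrix ι ι ℂ) * (hA.1.eigenvectorUnitary : Matrix ι ι ℂ) = 1 :=
    Matrix.mem_unitaryGroup_iff'.mp hA.1.eigenvectorUnitary.2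
  have hspec := hA.1.spectral_theorem
  rw [Unitary.conjStarAlgAut_apply] at hspec
  conv_rhs => rw [hspec]
  unfold sqrt
  have hd : Matrix.diagonal (RCLike.ofReal ∘ Real.sqrt ∘ hA.1.eigenvalues) *
      Matrix.diagonal (RCLike.ofReal ∘ Real.sqrt ∘ hA.1.eigenvalues)
      = Matrix.diagonal (RCLike.ofReal ∘ hA.1.eigenvalues : ι → ℂ) := by
    rw [Matrix.diagonal_mul_diagonal]
    congr 1
    funext i
    simp only [Function.comp_apply]
    rw [← RCLike.ofReal_mul, Real.mul_self_sqrt (hA.eigenvalues_nonneg i)]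
  calc _ = (hA.1.eigenvectorUnitary : Matrix ι ι ℂ) *
        (Matrix.diagonal (RCLike.ofReal ∘ Real.sqrt ∘ hA.1.eigenvalues) *
        (star (hA.1.eigenvectorUnitary : Matrix ι ι ℂ) * (hA.1.eigenvectorUnitary : Matrix ι ι ℂ)) *
        Matrix.diagonal (RCLike.ofReal ∘ Real.sqrt ∘ hA.1.eigenvalues)) *
        star (hA.1.eigenvectorUnitary : Matrix ι ι ℂ) := by simp only [Matrix.mul_assoc]
    _ = _ := by rw [hU2, Matrix.mul_one, hd]

open scoped MatrixOrder in
lemma eq_of_sq_eq_sq {ι : Type*} [Fintype ι] [DecidableEq ι] {A B : Matrix ι ι ℂ}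
    (hA : A.PosSemidef) (hB : B.PosSemidef) (h : A ^ 2 = B ^ 2) : A = B := by
  rw [pow_two, pow_two] at h
  exact (CFC.mul_self_eq_mul_self_iff A B hA.nonneg hB.nonneg).1 h

end Matrix.PosSemidef

-- transfer commutation across diagonal functions
private lemma diag_comm_transfer {ι : Type*} [Fintype ι] [DecidableEq ι]
    (Y : Matrix ι ι ℂ) (d e : ι → ℂ) (h : ∀ i j, d i = d j → e i = e j)
    (hY : Y * Matrix.diagonal d = Matrix.diagonal d * Y) :
    Y * Matrix.diagonal e = Matrix.diagonal e * Y := by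
  ext i j
  have hij := congrFun (congrFun hY i) j
  simp only [Matrix.mul_diagonal, Matrix.diagonal_mul] at hij ⊢
  by_cases hd : d i = d j
  · rw [h i j hd, mul_comm]
  · have h0 : Y i j * (d j - d i) = 0 := by rw [mul_sub, hij]; ring
    rcases mul_eq_zero.mp h0 with h0 | h0
    · simp [h0]
    · exact absurd (sub_eq_zero.mp h0).symm hd

private lemma commute_sqrt {ι : Type*} [Fintype ι] [DecidableEq ι]
    {A X : Matrix ι ι ℂ} (hA : A.PosSemidef) (h : X * A = A * X) :
    X * hA.sqrt = hA.sqrt * X := by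
  set U : Matrix ι ι ℂ := (hA.1.eigenvectorUnitary : Matrix ι ι ℂ)
  have hU1 : U * star U = 1 := Matrix.mem_unitaryGroup_iff.mp hA.1.eigenvectorUnitary.2
  have hU2 : star U * U = 1 := Matrix.mem_unitaryGroup_iff'.mp hA.1.eigenvectorUnitary.2
  set d : ι → ℂ := RCLike.ofReal ∘ hA.1.eigenvalues
  set e : ι → ℂ := RCLike.ofReal ∘ Real.sqrt ∘ hA.1.eigenvalues
  have hsq : hA.sqrt = U * Matrix.diagonal e * star U := rfl
  have hspec : A = U * Matrix.diagonal d * star U := by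
    have h := hA.1.spectral_theorem; rw [Unitary.conjStarAlgAut_apply] at h; exact h
  have hY : (star U * X * U) * Matrix.diagonal d = Matrix.diagonal d * (star U * X * U) := by
    have := congrArg (fun M => star U * M * U) h
    simp only [hspec, Matrix.mul_assoc] at this
    rw [hU2, Matrix.mul_one] at this
    calc star U * X * U * Matrix.diagonal d
        = star U * (X * (U * Matrix.diagonal d)) := by simp only [Matrix.mul_assoc]
      _ = star U * (U * (Matrix.diagonal d * (star U * (X * U)))) := this
      _ = (star U * U) * (Matrix.diagonal d * (star U * (X * U))) := by
          simp only [Matrix.mul_assoc]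
      _ = Matrix.diagonal d * (star U * X * U) := by
          rw [hU2, Matrix.one_mul]; simp only [Matrix.mul_assoc]
  have hY' := diag_comm_transfer _ d e (fun i j hij => by
      simp only [d, e, Function.comp_apply] at hij ⊢
      norm_cast at hij ⊢
      rw [hij]) hY
  calc X * hA.sqrt = U * ((star U * X * U) * Matrix.diagonal e) * star U := by
        rw [hsq]; simp only [Matrix.mul_assoc]
        rw [← Matrix.mul_assoc U (star U), hU1, Matrix.one_mul]
    _ = U * (Matrix.diagonal e * (star U * X * U)) * star U := by rw [hY']
    _ = hA.sqrt * X := by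
        rw [hsq]; simp only [Matrix.mul_assoc]
        rw [hU1, Matrix.mul_one]

private lemma kron_conjT {α β : Type*} [Fintype α] [Fintype β]
    (A : Matrix α α ℂ) (B : Matrix β β ℂ) : (A ⊗ₖ B)ᴴ = Aᴴ ⊗ₖ Bᴴ := by
  ext ⟨i, k⟩ ⟨j, l⟩
  simp [Matrix.conjTranspose_apply, Matrix.kroneckerMap_apply, mul_comm]




private def blockEquiv (n m : ℕ) :
    ((Fin 2 × (Fin n × Fin m)) ⊕ (Fin 2 × (Fin n × Fin m))) ≃
      ((Fin n ⊕ Fin n) × (Fin m ⊕ Fin m)) where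
  toFun x := match x with
    | .inl (k, i, j) => (if k = 0 then .inl i else .inr i, .inl j)
    | .inr (k, i, j) => (if k = 0 then .inl i else .inr i, .inr j)
  invFun x := match x with
    | (.inl i, .inl j) => .inl (0, i, j)
    | (.inr i, .inl j) => .inl (1, i, j)
    | (.inl i, .inr j) => .inr (0, i, j)
    | (.inr i, .inr j) => .inr (1, i, j)
  left_inv := by rintro (⟨k, i, j⟩ | ⟨k, i, j⟩) <;> fin_cases k <;> simp
  right_inv := by rintro ⟨i | i, j | j⟩ <;> simp

private lemma subm_eq {n m : ℕ} (C : Matrix (Fin n) (Fin n) ℂ) (D : Matrix (Fin m) (Fin m) ℂ) :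
    Matrix.submatrix
      ((Matrix.fromBlocks C 0 0 0) ⊗ₖ (Matrix.fromBlocks (1 : Matrix (Fin m) (Fin m) ℂ) 0 0 0)
        + (Matrix.fromBlocks ((1 : Matrix (Fin n) (Fin n) ℂ) - C) 0 0 0) ⊗ₖ
            (Matrix.fromBlocks D 0 0 0)
        + ((Matrix.fromBlocks 0 0 0 ((1 : Matrix (Fin n) (Fin n) ℂ) - C)) ⊗ₖ
            (Matrix.fromBlocks D 0 0 0)
          + (Matrix.fromBlocks 0 0 0 C) ⊗ₖ
              (Matrix.fromBlocks (1 : Matrix (Fin m) (Fin m) ℂ) 0 0 0)))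
      (blockEquiv n m) (blockEquiv n m)
    = Matrix.fromBlocks
        ((1 : Matrix (Fin 2) (Fin 2) ℂ) ⊗ₖ
          ((1 : Matrix (Fin n × Fin m) (Fin n × Fin m) ℂ) -
            ((1 : Matrix (Fin n) (Fin n) ℂ) - C) ⊗ₖ ((1 : Matrix (Fin m) (Fin m) ℂ) - D)))
        0 0 0 := by
  ext r c
  rcases r with ⟨k, i, j⟩ | ⟨k, i, j⟩ <;> rcases c with ⟨k', i', j'⟩ | ⟨k', i', j'⟩ <;>
    fin_cases k <;> fin_cases k' <;>
      simp [blockEquiv, Matrix.submatrix_apply, Matrix.kroneckerMap_apply, Matrix.one_apply,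
        Matrix.sub_apply, Prod.ext_iff] <;>
      split_ifs <;> simp_all <;> ring

/-- Let `C ∈ Mₙ(ℂ)` and `D ∈ Mₘ(ℂ)` be positive definite with `1 - C` and `1 - D` positive
definite, and let `RC`, `RD` be the positive semidefinite square roots of `C(1-C)` and
`D(1-D)`.  Form the projections `P_C = [[C, RC], [RC, 1-C]]`, `P_D = [[D, RD], [RD, 1-D]]`,
`Pₙ' = diag(1, 0)`, `Pₘ' = diag(1, 0)`, and in the Kronecker product set
`P = P_C ⊗ P_D + (1 - P_C) ⊗ Pₘ'` and `Q = Pₙ' ⊗ P_D + (1 - Pₙ') ⊗ Pₘ'`.  Then `Q P Q` is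
unitarily equivalent to the block diagonal matrix
`(1₂ ⊗ (1 - (1 - C) ⊗ (1 - D))) ⊕ 0`. -/
theorem compression_product_unitarily_equivalent {n m : ℕ}
    (C : Matrix (Fin n) (Fin n) ℂ) (D : Matrix (Fin m) (Fin m) ℂ)
    (hC : C.PosDef) (hC' : ((1 : Matrix (Fin n) (Fin n) ℂ) - C).PosDef)
    (hD : D.PosDef) (hD' : ((1 : Matrix (Fin m) (Fin m) ℂ) - D).PosDef)
    (RC : Matrix (Fin n) (Fin n) ℂ) (hRC : RC.PosSemidef)
    (hRC2 : RC * RC = C * ((1 : Matrix (Fin n) (Fin n) ℂ) - C))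
    (RD : Matrix (Fin m) (Fin m) ℂ) (hRD : RD.PosSemidef)
    (hRD2 : RD * RD = D * ((1 : Matrix (Fin m) (Fin m) ℂ) - D))
    (PC : Matrix (Fin n ⊕ Fin n) (Fin n ⊕ Fin n) ℂ)
    (hPC : PC = Matrix.fromBlocks C RC RC ((1 : Matrix (Fin n) (Fin n) ℂ) - C))
    (PD : Matrix (Fin m ⊕ Fin m) (Fin m ⊕ Fin m) ℂ)
    (hPD : PD = Matrix.fromBlocks D RD RD ((1 : Matrix (Fin m) (Fin m) ℂ) - D))
    (Pn' : Matrix (Fin n ⊕ Fin n) (Fin n ⊕ Fin n) ℂ)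
    (hPn' : Pn' = Matrix.fromBlocks (1 : Matrix (Fin n) (Fin n) ℂ) 0 0 0)
    (Pm' : Matrix (Fin m ⊕ Fin m) (Fin m ⊕ Fin m) ℂ)
    (hPm' : Pm' = Matrix.fromBlocks (1 : Matrix (Fin m) (Fin m) ℂ) 0 0 0)
    (P Q : Matrix ((Fin n ⊕ Fin n) × (Fin m ⊕ Fin m)) ((Fin n ⊕ Fin n) × (Fin m ⊕ Fin m)) ℂ)
    (hP : P = PC ⊗ₖ PD + (1 - PC) ⊗ₖ Pm')
    (hQ : Q = Pn' ⊗ₖ PD + (1 - Pn') ⊗ₖ Pm') :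
    ∃ U : Matrix ((Fin 2 × (Fin n × Fin m)) ⊕ (Fin 2 × (Fin n × Fin m)))
        ((Fin n ⊕ Fin n) × (Fin m ⊕ Fin m)) ℂ,
      U * Uᴴ = 1 ∧ Uᴴ * U = 1 ∧
      U * (Q * P * Q) * Uᴴ =
        Matrix.fromBlocks
          ((1 : Matrix (Fin 2) (Fin 2) ℂ) ⊗ₖ
            ((1 : Matrix (Fin n × Fin m) (Fin n × Fin m) ℂ) -
              ((1 : Matrix (Fin n) (Fin n) ℂ) - C) ⊗ₖ ((1 : Matrix (Fin m) (Fin m) ℂ) - D)))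
          0 0 0 := by
  classical
  -- abbreviations
  have hDpsd : D.PosSemidef := hD.posSemidef
  have hD'psd : ((1 : Matrix (Fin m) (Fin m) ℂ) - D).PosSemidef := hD'.posSemidef
  set E : Matrix (Fin m) (Fin m) ℂ := hDpsd.sqrt with hEdef
  set F : Matrix (Fin m) (Fin m) ℂ := hD'psd.sqrt with hFdef
  have hEpsd : E.PosSemidef := hDpsd.posSemidef_sqrt
  have hFpsd : F.PosSemidef := hD'psd.posSemidef_sqrt
  have hE2 : E * E = D := hDpsd.sqrt_mul_self
  have hF2 : F * F = (1 : Matrix (Fin m) (Fin m) ℂ) - D := hD'psd.sqrt_mul_self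
  have hEH : Eᴴ = E := hEpsd.1
  have hFH : Fᴴ = F := hFpsd.1
  have hsum : D + ((1 : Matrix (Fin m) (Fin m) ℂ) - D) = 1 := by abel
  have hDE : E * D = D * E := by rw [← hE2, Matrix.mul_assoc]
  have hF1D : F * ((1 : Matrix (Fin m) (Fin m) ℂ) - D) = ((1 : Matrix (Fin m) (Fin m) ℂ) - D) * F := by
    rw [← hF2, Matrix.mul_assoc]
  have hDF : F * D = D * F := by
    have h1 := hF1D
    rw [Matrix.mul_sub, Matrix.mul_one, Matrix.sub_mul, Matrix.one_mul] at h1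
    exact sub_right_injective h1
  have hEF : F * E = E * F := commute_sqrt hDpsd hDF
  have hE1D : E * ((1 : Matrix (Fin m) (Fin m) ℂ) - D) = ((1 : Matrix (Fin m) (Fin m) ℂ) - D) * E := by
    rw [Matrix.mul_sub, Matrix.mul_one, Matrix.sub_mul, Matrix.one_mul, hDE]
  have hEFpsd : (E * F).PosSemidef := by
    set G : Matrix (Fin m) (Fin m) ℂ := hFpsd.sqrt with hGdef
    have hG2 : G * G = F := hFpsd.sqrt_mul_self
    have hGH : Gᴴ = G := hFpsd.posSemidef_sqrt.1
    have hEG : E * G = G * E := commute_sqrt hFpsd hEF.symm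
    have key : E * F = G * E * Gᴴ := by
      rw [hGH]
      calc E * F = E * (G * G) := by rw [hG2]
        _ = E * G * G := by rw [Matrix.mul_assoc]
        _ = G * E * G := by rw [hEG]
    rw [key]
    exact hEpsd.mul_mul_conjTranspose_same G
  have hEFRD : E * F = RD := by
    refine hEFpsd.eq_of_sq_eq_sq hRD ?_
    rw [pow_two, pow_two]
    calc E * F * (E * F) = E * (F * E * F) := by simp only [Matrix.mul_assoc]
      _ = E * (E * F * F) := by rw [hEF]
      _ = E * E * (F * F) := by simp only [Matrix.mul_assoc]
      _ = D * ((1 : Matrix (Fin m) (Fin m) ℂ) - D) := by rw [hE2, hF2]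
      _ = RD * RD := hRD2.symm
  have hDRD : D * RD = RD * D := by
    rw [← hEFRD, ← Matrix.mul_assoc, ← hDE, Matrix.mul_assoc, ← hDF, ← Matrix.mul_assoc]
  have hERD : E * RD = D * F := by rw [← hEFRD, ← Matrix.mul_assoc, hE2]
  have hFRD : F * RD = E * ((1 : Matrix (Fin m) (Fin m) ℂ) - D) := by
    rw [← hEFRD, ← Matrix.mul_assoc, hEF, Matrix.mul_assoc, hF2]
  -- PD is a projection
  have hPDsq : PD * PD = PD := by
    have e11 : D * D + RD * RD = D := by rw [hRD2, Matrix.mul_sub, Matrix.mul_one]; abel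
    have e12 : D * RD + RD * ((1 : Matrix (Fin m) (Fin m) ℂ) - D) = RD := by
      rw [Matrix.mul_sub, Matrix.mul_one, hDRD]; abel
    have e21 : RD * D + ((1 : Matrix (Fin m) (Fin m) ℂ) - D) * RD = RD := by
      rw [Matrix.sub_mul, Matrix.one_mul, hDRD]; abel
    have e22 : RD * RD + ((1 : Matrix (Fin m) (Fin m) ℂ) - D) * ((1 : Matrix (Fin m) (Fin m) ℂ) - D)
        = (1 : Matrix (Fin m) (Fin m) ℂ) - D := by
      rw [hRD2, Matrix.sub_mul, Matrix.one_mul, Matrix.mul_sub, Matrix.mul_one]; abel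
    rw [hPD, Matrix.fromBlocks_multiply, e11, e12, e21, e22]
  have hgg : Pm' * Pm' = Pm' := by rw [hPm']; simp [Matrix.fromBlocks_multiply]
  -- the unitary V on the m-side
  set V : Matrix (Fin m ⊕ Fin m) (Fin m ⊕ Fin m) ℂ := Matrix.fromBlocks E F F (-E) with hVdef
  have i11 : E * E + F * F = (1 : Matrix (Fin m) (Fin m) ℂ) := by rw [hE2, hF2]; abel
  have i12 : E * F + F * (-E) = 0 := by rw [Matrix.mul_neg, hEF]; abel
  have i21 : F * E + (-E) * F = 0 := by rw [Matrix.neg_mul, hEF]; abel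
  have i22 : F * F + (-E) * (-E) = (1 : Matrix (Fin m) (Fin m) ℂ) := by
    rw [neg_mul_neg, hE2, hF2]; abel
  have hVV : V * V = 1 := by
    rw [hVdef, Matrix.fromBlocks_multiply, i11, i12, i21, i22, Matrix.fromBlocks_one]
  have hVH : Vᴴ = V := by
    rw [hVdef, Matrix.fromBlocks_conjTranspose, hEH, hFH, Matrix.conjTranspose_neg, hEH]
  have hVPD : V * PD = Matrix.fromBlocks E F 0 0 := by
    have a11 : E * D + F * RD = E := by
      rw [hFRD, ← Matrix.mul_add, hsum, Matrix.mul_one]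
    have a12 : E * RD + F * ((1 : Matrix (Fin m) (Fin m) ℂ) - D) = F := by
      rw [hERD, hF1D, ← Matrix.add_mul, hsum, Matrix.one_mul]
    have a21 : F * D + (-E) * RD = 0 := by rw [Matrix.neg_mul, hERD, hDF]; abel
    have a22 : F * RD + (-E) * ((1 : Matrix (Fin m) (Fin m) ℂ) - D) = 0 := by
      rw [Matrix.neg_mul, hFRD]; abel
    rw [hVdef, hPD, Matrix.fromBlocks_multiply, a11, a12, a21, a22]
  have hVPDV : V * PD * V = Matrix.fromBlocks (1 : Matrix (Fin m) (Fin m) ℂ) 0 0 0 := by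
    rw [hVPD, hVdef, Matrix.fromBlocks_multiply, i11, i12]
    simp
  set K : Matrix (Fin m ⊕ Fin m) (Fin m ⊕ Fin m) ℂ :=
    Matrix.fromBlocks (D * D) (D * RD) (RD * D) (RD * RD) with hKdef
  have hfgf : PD * Pm' * PD = K := by
    rw [hKdef, hPD, hPm']
    simp [Matrix.fromBlocks_multiply]
  have hgfg : Pm' * PD * Pm' = Matrix.fromBlocks D 0 0 0 := by
    rw [hPD, hPm']
    simp [Matrix.fromBlocks_multiply]
  have hVK : V * K = Matrix.fromBlocks (E * D) (D * F) 0 0 := by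
    have k11 : E * (D * D) + F * (RD * D) = E * D := by
      rw [← Matrix.mul_assoc, ← Matrix.mul_assoc, hFRD, ← Matrix.add_mul, ← Matrix.mul_add,
        hsum, Matrix.mul_one]
    have k12 : E * (D * RD) + F * (RD * RD) = D * F := by
      calc E * (D * RD) + F * (RD * RD)
          = E * D * RD + F * RD * RD := by simp only [Matrix.mul_assoc]
        _ = D * E * RD + E * ((1 : Matrix (Fin m) (Fin m) ℂ) - D) * RD := by rw [hDE, hFRD]
        _ = D * (E * RD) + ((1 : Matrix (Fin m) (Fin m) ℂ) - D) * E * RD := by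
            rw [hE1D]; simp only [Matrix.mul_assoc]
        _ = D * (D * F) + ((1 : Matrix (Fin m) (Fin m) ℂ) - D) * (D * F) := by
            rw [Matrix.mul_assoc, hERD]
        _ = (D + ((1 : Matrix (Fin m) (Fin m) ℂ) - D)) * (D * F) := by rw [Matrix.add_mul]
        _ = D * F := by rw [hsum, Matrix.one_mul]
    have k21 : F * (D * D) + (-E) * (RD * D) = 0 := by
      calc F * (D * D) + (-E) * (RD * D)
          = F * D * D + -(E * RD * D) := by simp only [Matrix.neg_mul, Matrix.mul_assoc]
        _ = D * F * D + -(D * F * D) := by rw [hDF, hERD]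
        _ = 0 := by abel
    have k22 : F * (D * RD) + (-E) * (RD * RD) = 0 := by
      calc F * (D * RD) + (-E) * (RD * RD)
          = F * D * RD + -(E * RD * RD) := by simp only [Matrix.neg_mul, Matrix.mul_assoc]
        _ = D * F * RD + -(D * F * RD) := by rw [hDF, hERD]
        _ = 0 := by abel
    rw [hVdef, hKdef, Matrix.fromBlocks_multiply, k11, k12, k21, k22]
  have hVKV : V * K * V = Matrix.fromBlocks D 0 0 0 := by
    have l11 : E * D * E + D * F * F = D := by
      calc E * D * E + D * F * F = D * E * E + D * (F * F) := by
            rw [← hDE]; simp only [Matrix.mul_assoc]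
        _ = D * (E * E) + D * (F * F) := by simp only [Matrix.mul_assoc]
        _ = D * D + D * ((1 : Matrix (Fin m) (Fin m) ℂ) - D) := by rw [hE2, hF2]
        _ = D * (D + ((1 : Matrix (Fin m) (Fin m) ℂ) - D)) := by rw [Matrix.mul_add]
        _ = D := by rw [hsum, Matrix.mul_one]
    have l12 : E * D * F + D * F * (-E) = 0 := by
      calc E * D * F + D * F * (-E)
          = D * E * F + -(D * (F * E)) := by
            rw [← hDE]; simp only [Matrix.mul_neg, Matrix.mul_assoc]
        _ = D * (E * F) + -(D * (E * F)) := by rw [hEF]; simp only [Matrix.mul_assoc]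
        _ = 0 := by abel
    rw [hVK, hVdef, Matrix.fromBlocks_multiply, l11, l12]
    simp
  -- n-side blocks
  have hbn : (1 : Matrix (Fin n ⊕ Fin n) (Fin n ⊕ Fin n) ℂ) - Pn'
      = Matrix.fromBlocks 0 0 0 (1 : Matrix (Fin n) (Fin n) ℂ) := by
    ext (i | i) (j | j) <;>
      simp [hPn', Matrix.sub_apply, Matrix.one_apply, Sum.inl.injEq, Sum.inr.injEq]
  have hqn : (1 : Matrix (Fin n ⊕ Fin n) (Fin n ⊕ Fin n) ℂ) - PC
      = Matrix.fromBlocks ((1 : Matrix (Fin n) (Fin n) ℂ) - C) (-RC) (-RC) C := by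
    ext (i | i) (j | j) <;>
      simp [hPC, Matrix.sub_apply, Matrix.one_apply, Sum.inl.injEq, Sum.inr.injEq]
  have hapa : Pn' * PC * Pn' = Matrix.fromBlocks C 0 0 0 := by
    rw [hPn', hPC]; simp [Matrix.fromBlocks_multiply]
  have haqa : Pn' * ((1 : Matrix (Fin n ⊕ Fin n) (Fin n ⊕ Fin n) ℂ) - PC) * Pn'
      = Matrix.fromBlocks ((1 : Matrix (Fin n) (Fin n) ℂ) - C) 0 0 0 := by
    rw [hqn, hPn']; simp [Matrix.fromBlocks_multiply]
  have hbpb : ((1 : Matrix (Fin n ⊕ Fin n) (Fin n ⊕ Fin n) ℂ) - Pn') * PC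
      * ((1 : Matrix (Fin n ⊕ Fin n) (Fin n ⊕ Fin n) ℂ) - Pn')
      = Matrix.fromBlocks 0 0 0 ((1 : Matrix (Fin n) (Fin n) ℂ) - C) := by
    rw [hbn, hPC]; simp [Matrix.fromBlocks_multiply]
  have hbqb : ((1 : Matrix (Fin n ⊕ Fin n) (Fin n ⊕ Fin n) ℂ) - Pn')
      * ((1 : Matrix (Fin n ⊕ Fin n) (Fin n ⊕ Fin n) ℂ) - PC)
      * ((1 : Matrix (Fin n ⊕ Fin n) (Fin n ⊕ Fin n) ℂ) - Pn')
      = Matrix.fromBlocks 0 0 0 C := by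
    rw [hbn, hqn]; simp [Matrix.fromBlocks_multiply]
  have hab : Pn' * ((1 : Matrix (Fin n ⊕ Fin n) (Fin n ⊕ Fin n) ℂ) - Pn') = 0 := by
    rw [hbn, hPn']; simp [Matrix.fromBlocks_multiply]
  have hba : ((1 : Matrix (Fin n ⊕ Fin n) (Fin n ⊕ Fin n) ℂ) - Pn') * Pn' = 0 := by
    rw [hbn, hPn']; simp [Matrix.fromBlocks_multiply]
  have hPCsum : PC + ((1 : Matrix (Fin n ⊕ Fin n) (Fin n ⊕ Fin n) ℂ) - PC) = 1 := by abel
  -- expansion of Q * P * Q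
  have hexp : Q * P * Q =
      ((Pn' * PC * Pn') ⊗ₖ (PD * PD * PD)
        + (Pn' * ((1:Matrix (Fin n ⊕ Fin n) (Fin n ⊕ Fin n) ℂ) - PC) * Pn') ⊗ₖ (PD * Pm' * PD)
        + (((1:Matrix (Fin n ⊕ Fin n) (Fin n ⊕ Fin n) ℂ) - Pn') * PC
            * ((1:Matrix (Fin n ⊕ Fin n) (Fin n ⊕ Fin n) ℂ) - Pn')) ⊗ₖ (Pm' * PD * Pm')
        + (((1:Matrix (Fin n ⊕ Fin n) (Fin n ⊕ Fin n) ℂ) - Pn')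
            * ((1:Matrix (Fin n ⊕ Fin n) (Fin n ⊕ Fin n) ℂ) - PC)
            * ((1:Matrix (Fin n ⊕ Fin n) (Fin n ⊕ Fin n) ℂ) - Pn')) ⊗ₖ (Pm' * Pm' * Pm'))
      + (((Pn' * PC * ((1:Matrix (Fin n ⊕ Fin n) (Fin n ⊕ Fin n) ℂ) - Pn')) ⊗ₖ (PD * PD * Pm')
        + (Pn' * ((1:Matrix (Fin n ⊕ Fin n) (Fin n ⊕ Fin n) ℂ) - PC)
            * ((1:Matrix (Fin n ⊕ Fin n) (Fin n ⊕ Fin n) ℂ) - Pn')) ⊗ₖ (PD * Pm' * Pm'))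
        + ((((1:Matrix (Fin n ⊕ Fin n) (Fin n ⊕ Fin n) ℂ) - Pn') * PC * Pn') ⊗ₖ (Pm' * PD * PD)
        + (((1:Matrix (Fin n ⊕ Fin n) (Fin n ⊕ Fin n) ℂ) - Pn')
            * ((1:Matrix (Fin n ⊕ Fin n) (Fin n ⊕ Fin n) ℂ) - PC) * Pn') ⊗ₖ (Pm' * Pm' * PD))) := by
    rw [hP, hQ]
    simp only [Matrix.add_mul, Matrix.mul_add, Matrix.mul_kronecker_mul]
    abel
  have hfff : PD * PD * PD = PD := by rw [hPDsq, hPDsq]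
  have hffg : PD * PD * Pm' = PD * Pm' := by rw [hPDsq]
  have hggg : Pm' * Pm' * Pm' = Pm' := by rw [hgg, hgg]
  have hfgg : PD * Pm' * Pm' = PD * Pm' := by rw [Matrix.mul_assoc, hgg]
  have hgff : Pm' * PD * PD = Pm' * PD := by rw [Matrix.mul_assoc, hPDsq]
  have hggf : Pm' * Pm' * PD = Pm' * PD := by rw [hgg]
  have hcancel1 : (Pn' * PC * ((1:Matrix (Fin n ⊕ Fin n) (Fin n ⊕ Fin n) ℂ) - Pn')) ⊗ₖ (PD * Pm')
      + (Pn' * ((1:Matrix (Fin n ⊕ Fin n) (Fin n ⊕ Fin n) ℂ) - PC)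
          * ((1:Matrix (Fin n ⊕ Fin n) (Fin n ⊕ Fin n) ℂ) - Pn')) ⊗ₖ (PD * Pm') = 0 := by
    rw [← Matrix.add_kronecker, ← Matrix.add_mul, ← Matrix.mul_add, hPCsum, Matrix.mul_one,
      hab, Matrix.zero_kronecker]
  have hcancel2 : (((1:Matrix (Fin n ⊕ Fin n) (Fin n ⊕ Fin n) ℂ) - Pn') * PC * Pn') ⊗ₖ (Pm' * PD)
      + (((1:Matrix (Fin n ⊕ Fin n) (Fin n ⊕ Fin n) ℂ) - Pn')
          * ((1:Matrix (Fin n ⊕ Fin n) (Fin n ⊕ Fin n) ℂ) - PC) * Pn') ⊗ₖ (Pm' * PD) = 0 := by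
    rw [← Matrix.add_kronecker, ← Matrix.add_mul, ← Matrix.mul_add, hPCsum, Matrix.mul_one,
      hba, Matrix.zero_kronecker]
  have hQPQ : Q * P * Q =
      (Matrix.fromBlocks C 0 0 0) ⊗ₖ PD
      + (Matrix.fromBlocks ((1 : Matrix (Fin n) (Fin n) ℂ) - C) 0 0 0) ⊗ₖ K
      + ((Matrix.fromBlocks 0 0 0 ((1 : Matrix (Fin n) (Fin n) ℂ) - C)) ⊗ₖ (Matrix.fromBlocks D 0 0 0)
      + (Matrix.fromBlocks 0 0 0 C) ⊗ₖ Pm') := by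
    rw [hexp, hfff, hffg, hfgg, hgff, hggf, hggg, hapa, haqa, hbpb, hbqb,
      hcancel1, hcancel2, hfgf, hgfg]
    abel
  -- n-side block helper identities
  have htopl : ∀ Z : Matrix (Fin n) (Fin n) ℂ,
      (Matrix.fromBlocks (1 : Matrix (Fin n) (Fin n) ℂ) 0 0 0 : Matrix (Fin n ⊕ Fin n) (Fin n ⊕ Fin n) ℂ) * Matrix.fromBlocks Z 0 0 0
        = Matrix.fromBlocks Z 0 0 0 := fun Z => by simp [Matrix.fromBlocks_multiply]
  have htopr : ∀ Z : Matrix (Fin n) (Fin n) ℂ,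
      Matrix.fromBlocks Z 0 0 0 * (Matrix.fromBlocks (1 : Matrix (Fin n) (Fin n) ℂ) 0 0 0 : Matrix (Fin n ⊕ Fin n) (Fin n ⊕ Fin n) ℂ)
        = Matrix.fromBlocks Z 0 0 0 := fun Z => by simp [Matrix.fromBlocks_multiply]
  have htopb0 : ∀ Z : Matrix (Fin n) (Fin n) ℂ,
      Matrix.fromBlocks Z 0 0 0 * (Matrix.fromBlocks 0 0 0 (1 : Matrix (Fin n) (Fin n) ℂ) : Matrix (Fin n ⊕ Fin n) (Fin n ⊕ Fin n) ℂ)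
        = 0 := fun Z => by
    simp [Matrix.fromBlocks_multiply, ← Matrix.fromBlocks_zero]
  have hbot0 : ∀ Z : Matrix (Fin n) (Fin n) ℂ,
      (Matrix.fromBlocks 0 0 0 (1 : Matrix (Fin n) (Fin n) ℂ) : Matrix (Fin n ⊕ Fin n) (Fin n ⊕ Fin n) ℂ) * Matrix.fromBlocks Z 0 0 0
        = 0 := fun Z => by
    simp [Matrix.fromBlocks_multiply, ← Matrix.fromBlocks_zero]
  have hbotl : ∀ Z : Matrix (Fin n) (Fin n) ℂ,
      (Matrix.fromBlocks 0 0 0 (1 : Matrix (Fin n) (Fin n) ℂ) : Matrix (Fin n ⊕ Fin n) (Fin n ⊕ Fin n) ℂ) * Matrix.fromBlocks 0 0 0 Z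
        = Matrix.fromBlocks 0 0 0 Z := fun Z => by simp [Matrix.fromBlocks_multiply]
  have hbotr : ∀ Z : Matrix (Fin n) (Fin n) ℂ,
      Matrix.fromBlocks 0 0 0 Z * (Matrix.fromBlocks 0 0 0 (1 : Matrix (Fin n) (Fin n) ℂ) : Matrix (Fin n ⊕ Fin n) (Fin n ⊕ Fin n) ℂ)
        = Matrix.fromBlocks 0 0 0 Z := fun Z => by simp [Matrix.fromBlocks_multiply]
  have hbot_an : ∀ Z : Matrix (Fin n) (Fin n) ℂ,
      Matrix.fromBlocks 0 0 0 Z * (Matrix.fromBlocks (1 : Matrix (Fin n) (Fin n) ℂ) 0 0 0 : Matrix (Fin n ⊕ Fin n) (Fin n ⊕ Fin n) ℂ)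
        = 0 := fun Z => by
    simp [Matrix.fromBlocks_multiply, ← Matrix.fromBlocks_zero]
  have han_bot : ∀ Z : Matrix (Fin n) (Fin n) ℂ,
      (Matrix.fromBlocks (1 : Matrix (Fin n) (Fin n) ℂ) 0 0 0 : Matrix (Fin n ⊕ Fin n) (Fin n ⊕ Fin n) ℂ) * Matrix.fromBlocks 0 0 0 Z
        = 0 := fun Z => by
    simp [Matrix.fromBlocks_multiply, ← Matrix.fromBlocks_zero]
  -- the big unitary W₂
  set W₂ : Matrix ((Fin n ⊕ Fin n) × (Fin m ⊕ Fin m)) ((Fin n ⊕ Fin n) × (Fin m ⊕ Fin m)) ℂ :=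
    (Matrix.fromBlocks (1 : Matrix (Fin n) (Fin n) ℂ) 0 0 0) ⊗ₖ V
      + (Matrix.fromBlocks 0 0 0 (1 : Matrix (Fin n) (Fin n) ℂ)) ⊗ₖ
          (1 : Matrix (Fin m ⊕ Fin m) (Fin m ⊕ Fin m) ℂ) with hWdef
  have hansum : (Matrix.fromBlocks (1 : Matrix (Fin n) (Fin n) ℂ) 0 0 0 : Matrix (Fin n ⊕ Fin n) (Fin n ⊕ Fin n) ℂ)
      + (Matrix.fromBlocks 0 0 0 (1 : Matrix (Fin n) (Fin n) ℂ) : Matrix (Fin n ⊕ Fin n) (Fin n ⊕ Fin n) ℂ)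
      = (1 : Matrix (Fin n ⊕ Fin n) (Fin n ⊕ Fin n) ℂ) := by
    rw [Matrix.fromBlocks_add, ← Matrix.fromBlocks_one]
    simp
  have hW2sq : W₂ * W₂ = 1 := by
    rw [hWdef]
    simp only [Matrix.add_mul, Matrix.mul_add, ← Matrix.mul_kronecker_mul, htopl, htopb0,
      hbot_an, hbotr, hVV, Matrix.zero_kronecker, Matrix.one_mul, Matrix.mul_one,
      add_zero, zero_add]
    rw [← Matrix.add_kronecker, hansum, Matrix.one_kronecker_one]
  have hanH : (Matrix.fromBlocks (1 : Matrix (Fin n) (Fin n) ℂ) 0 0 0 : Matrix (Fin n ⊕ Fin n) (Fin n ⊕ Fin n) ℂ)ᴴ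
      = (Matrix.fromBlocks (1 : Matrix (Fin n) (Fin n) ℂ) 0 0 0 : Matrix (Fin n ⊕ Fin n) (Fin n ⊕ Fin n) ℂ) := by
    rw [Matrix.fromBlocks_conjTranspose]; simp
  have hbnH : (Matrix.fromBlocks 0 0 0 (1 : Matrix (Fin n) (Fin n) ℂ) : Matrix (Fin n ⊕ Fin n) (Fin n ⊕ Fin n) ℂ)ᴴ
      = (Matrix.fromBlocks 0 0 0 (1 : Matrix (Fin n) (Fin n) ℂ) : Matrix (Fin n ⊕ Fin n) (Fin n ⊕ Fin n) ℂ) := by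
    rw [Matrix.fromBlocks_conjTranspose]; simp
  have hW2H : W₂ᴴ = W₂ := by
    rw [hWdef, Matrix.conjTranspose_add, kron_conjT, kron_conjT, hVH, Matrix.conjTranspose_one,
      hanH, hbnH]
  -- conjugation of the four pieces
  have hconjtop : ∀ (Z : Matrix (Fin n) (Fin n) ℂ)
      (Y : Matrix (Fin m ⊕ Fin m) (Fin m ⊕ Fin m) ℂ),
      W₂ * ((Matrix.fromBlocks Z 0 0 0) ⊗ₖ Y) * W₂
        = (Matrix.fromBlocks Z 0 0 0) ⊗ₖ (V * Y * V) := by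
    intro Z Y
    rw [hWdef]
    simp only [Matrix.add_mul, Matrix.mul_add, ← Matrix.mul_kronecker_mul, htopl, htopr,
      htopb0, hbot0, Matrix.zero_mul, Matrix.mul_zero, Matrix.zero_kronecker,
      Matrix.one_mul, Matrix.mul_one, add_zero, zero_add]
  have hconjbot : ∀ (Z : Matrix (Fin n) (Fin n) ℂ)
      (Y : Matrix (Fin m ⊕ Fin m) (Fin m ⊕ Fin m) ℂ),
      W₂ * ((Matrix.fromBlocks 0 0 0 Z) ⊗ₖ Y) * W₂
        = (Matrix.fromBlocks 0 0 0 Z) ⊗ₖ Y := by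
    intro Z Y
    rw [hWdef]
    simp only [Matrix.add_mul, Matrix.mul_add, ← Matrix.mul_kronecker_mul, hbotl, hbotr,
      hbot_an, han_bot, Matrix.zero_mul, Matrix.mul_zero, Matrix.zero_kronecker,
      Matrix.one_mul, Matrix.mul_one, add_zero, zero_add]
  have hconjQPQ : W₂ * (Q * P * Q) * W₂
      = (Matrix.fromBlocks C 0 0 0) ⊗ₖ (Matrix.fromBlocks (1 : Matrix (Fin m) (Fin m) ℂ) 0 0 0)
        + (Matrix.fromBlocks ((1 : Matrix (Fin n) (Fin n) ℂ) - C) 0 0 0) ⊗ₖ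
            (Matrix.fromBlocks D 0 0 0)
        + ((Matrix.fromBlocks 0 0 0 ((1 : Matrix (Fin n) (Fin n) ℂ) - C)) ⊗ₖ
            (Matrix.fromBlocks D 0 0 0)
          + (Matrix.fromBlocks 0 0 0 C) ⊗ₖ
              (Matrix.fromBlocks (1 : Matrix (Fin m) (Fin m) ℂ) 0 0 0)) := by
    rw [hQPQ]
    simp only [Matrix.mul_add, Matrix.add_mul]
    rw [hconjtop C PD, hconjtop ((1 : Matrix (Fin n) (Fin n) ℂ) - C) K,
      hconjbot ((1 : Matrix (Fin n) (Fin n) ℂ) - C) (Matrix.fromBlocks D 0 0 0),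
      hconjbot C Pm', hVPDV, hVKV, hPm']
  -- assemble the unitary
  refine ⟨W₂.submatrix (blockEquiv n m) id, ?_, ?_, ?_⟩
  · rw [Matrix.conjTranspose_submatrix, hW2H,
      ← Matrix.submatrix_mul W₂ W₂ ⇑(blockEquiv n m) id ⇑(blockEquiv n m)
        Function.bijective_id,
      hW2sq, Matrix.submatrix_one_equiv]
  · rw [Matrix.conjTranspose_submatrix, hW2H,
      ← Matrix.submatrix_mul W₂ W₂ id ⇑(blockEquiv n m) id (blockEquiv n m).bijective,
      hW2sq, Matrix.submatrix_id_id]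
  · rw [Matrix.conjTranspose_submatrix, hW2H]
    have hmid : Q * P * Q = (Q * P * Q).submatrix id id := (Matrix.submatrix_id_id _).symm
    rw [hmid,
      ← Matrix.submatrix_mul W₂ (Q * P * Q) ⇑(blockEquiv n m) id id Function.bijective_id,
      ← Matrix.submatrix_mul (W₂ * (Q * P * Q)) W₂ ⇑(blockEquiv n m) id ⇑(blockEquiv n m)
        Function.bijective_id,
      hconjQPQ]
    exact subm_eq C D
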